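/- Let A, B ⊆ ℝ^N be disjoint measurable sets with γ(A) > 0 and γ(B) > 0. Then there exists a constant C = C(A,B) > 0 such that s·L^γ_s(A,B) ≥ C for every s ∈ (0,1). In particular, if A, B ⊆ B_R(0) for some R > 0, one may take C = 2 exp(-2R²/(e²-1)) γ(A) γ(B). -/

import Mathlib

open MeasureTheory Real Set Filter

noncomputable def gaussDensity (N : ℕ) (x : EuclideanSpace ℝ (Fin N)) : ℝ :=
  (2 * π) ^ (-(N : ℝ) / 2) * Real.exp (-‖x‖ ^ 2 / 2)

noncomputable def gaussMeasure (N : ℕ) : Measure (EuclideanSpace ℝ (Fin N)) :=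
  volume.withDensity fun x => ENNReal.ofReal (gaussDensity N x)

noncomputable def mehler (N : ℕ) (t : ℝ) (x y : EuclideanSpace ℝ (Fin N)) : ℝ :=
  (1 - Real.exp (-2 * t)) ^ (-(N : ℝ) / 2) *
    Real.exp (-(Real.exp (-2 * t) * ‖x‖ ^ 2 - 2 * Real.exp (-t) * (inner ℝ x y : ℝ) +
      Real.exp (-2 * t) * ‖y‖ ^ 2) / (2 * (1 - Real.exp (-2 * t))))

noncomputable def Kker (N : ℕ) (σ : ℝ) (x y : EuclideanSpace ℝ (Fin N)) : ENNReal :=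
  ∫⁻ t in Ioi (0 : ℝ), ENNReal.ofReal (mehler N t x y * t ^ (-σ / 2 - 1))

noncomputable def Lgamma (N : ℕ) (s : ℝ) (A B : Set (EuclideanSpace ℝ (Fin N))) : ENNReal :=
  ∫⁻ x in A, ∫⁻ y in B, Kker N s x y ∂(gaussMeasure N) ∂(gaussMeasure N)

noncomputable def Pgamma (N : ℕ) (s : ℝ) (E Ω : Set (EuclideanSpace ℝ (Fin N))) : ENNReal :=
  Lgamma N s (E ∩ Ω) (Eᶜ ∩ Ω) + Lgamma N s (E ∩ Ω) (Eᶜ ∩ Ωᶜ) + Lgamma N s (E ∩ Ωᶜ) (Eᶜ ∩ Ω)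

/-- Lower bound for the Mehler kernel on a ball. -/
lemma mehler_lower (N : ℕ) {t R : ℝ} (ht : 0 < t)
    {x y : EuclideanSpace ℝ (Fin N)} (hx : ‖x‖ ≤ R) (hy : ‖y‖ ≤ R) :
    Real.exp (-R ^ 2 / (Real.exp t - 1)) ≤ mehler N t x y := by
  have hR : 0 ≤ R := le_trans (norm_nonneg x) hx
  set u := Real.exp (-t) with hu
  have hu0 : 0 < u := Real.exp_pos _
  have hu1 : u < 1 := Real.exp_lt_one_iff.mpr (by linarith)
  have h2t : Real.exp (-2 * t) = u ^ 2 := by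
    rw [show (-2:ℝ)*t = -t + -t by ring, Real.exp_add, hu, sq]
  have het : Real.exp t = u⁻¹ := by
    rw [hu, ← Real.exp_neg, neg_neg]
  have hd : 0 < 1 - u ^ 2 := by nlinarith
  have hip : -(R ^ 2) ≤ (inner ℝ x y : ℝ) := by
    have h1 : |(inner ℝ x y : ℝ)| ≤ ‖x‖ * ‖y‖ := abs_real_inner_le_norm x y
    have h2 : ‖x‖ * ‖y‖ ≤ R * R :=
      mul_le_mul hx hy (norm_nonneg _) hR
    nlinarith [neg_abs_le (inner ℝ x y : ℝ)]
  have hx2 : ‖x‖ ^ 2 ≤ R ^ 2 := by nlinarith [norm_nonneg x]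
  have hy2 : ‖y‖ ^ 2 ≤ R ^ 2 := by nlinarith [norm_nonneg y]
  have hQ : u ^ 2 * ‖x‖ ^ 2 - 2 * u * (inner ℝ x y : ℝ) + u ^ 2 * ‖y‖ ^ 2
      ≤ 2 * R ^ 2 * u * (1 + u) := by nlinarith [sq_nonneg u, hu0.le]
  have harg : -R ^ 2 / (Real.exp t - 1) ≤
      -(u ^ 2 * ‖x‖ ^ 2 - 2 * u * (inner ℝ x y : ℝ) + u ^ 2 * ‖y‖ ^ 2) / (2 * (1 - u ^ 2)) := by
    have he1 : Real.exp t - 1 = (1 - u) / u := by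
      rw [het]; field_simp
    have hL : -R ^ 2 / ((1 - u) / u) = -R ^ 2 * u / (1 - u) := div_div_eq_mul_div _ _ _
    rw [he1, hL, div_le_div_iff₀ (by linarith) (by positivity)]
    nlinarith [mul_le_mul_of_nonneg_right hQ (by linarith : (0:ℝ) ≤ 1 - u)]
  have hpref : (1 : ℝ) ≤ (1 - u ^ 2) ^ (-(N : ℝ) / 2) :=
    Real.one_le_rpow_of_pos_of_le_one_of_nonpos hd (by nlinarith)
      (by have : (0:ℝ) ≤ (N : ℝ) := Nat.cast_nonneg N; linarith)
  calc Real.exp (-R ^ 2 / (Real.exp t - 1))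
      ≤ Real.exp (-(u ^ 2 * ‖x‖ ^ 2 - 2 * u * (inner ℝ x y : ℝ) + u ^ 2 * ‖y‖ ^ 2) /
          (2 * (1 - u ^ 2))) := Real.exp_le_exp.mpr harg
    _ ≤ mehler N t x y := by
        rw [mehler, h2t]
        exact le_mul_of_one_le_left (Real.exp_pos _).le hpref

lemma ce_le_one : (1 - (Real.sqrt 2)⁻¹) * Real.exp 1 ≤ 1 := by
  have hs0 : (0:ℝ) < Real.sqrt 2 := Real.sqrt_pos.mpr (by norm_num)
  have hs : Real.sqrt 2 ^ 2 = 2 := Real.sq_sqrt (by norm_num)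
  have he : Real.exp 1 < 2.7182818286 := Real.exp_one_lt_d9
  have he0 : (0:ℝ) < Real.exp 1 := Real.exp_pos 1
  rw [show 1 - (Real.sqrt 2)⁻¹ = (Real.sqrt 2 - 1) / Real.sqrt 2 by field_simp]
  rw [div_mul_eq_mul_div, div_le_one hs0]
  have hlt : Real.sqrt 2 < 1.5 := by nlinarith
  have hgt : (1.41 : ℝ) < Real.sqrt 2 := by nlinarith
  nlinarith

lemma real_ineq {s a : ℝ} (hs0 : 0 < s) (hs1 : s < 1) (ha : 0 ≤ a) :
    2 * Real.exp (-2 * a / (Real.exp 2 - 1)) ≤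
      2 * (1 - (2:ℝ) ^ (-s/2)) * Real.exp (-a / (Real.exp 1 - 1)) +
      2 * ((2:ℝ) ^ (-s/2)) * Real.exp (-a / (Real.exp 2 - 1)) := by
  obtain ⟨e, hedef⟩ : ∃ e : ℝ, e = Real.exp 1 := ⟨_, rfl⟩
  have he : 2 < e := by rw [hedef]; exact lt_trans (by norm_num) Real.exp_one_gt_d9
  have he' : e < 2.7182818286 := by rw [hedef]; exact Real.exp_one_lt_d9
  have he2 : Real.exp 2 = e * e := by rw [hedef, ← Real.exp_add]; norm_num
  have hden : (0:ℝ) < e * e - 1 := by nlinarith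
  rw [he2, ← hedef]
  obtain ⟨θ, hθdef⟩ : ∃ θ : ℝ, θ = (2:ℝ) ^ (-s/2) := ⟨_, rfl⟩
  rw [← hθdef]
  have hθ1 : θ ≤ 1 := by
    rw [hθdef]; exact Real.rpow_le_one_of_one_le_of_nonpos (by norm_num) (by linarith)
  have hrr : (2:ℝ) ^ (-(1:ℝ)/2) = (Real.sqrt 2)⁻¹ := by
    rw [Real.sqrt_eq_rpow, ← Real.rpow_neg (by norm_num)]; norm_num
  have hθ2 : (Real.sqrt 2)⁻¹ ≤ θ := by
    rw [← hrr, hθdef]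
    exact (Real.rpow_le_rpow_left_iff (by norm_num)).mpr (by linarith)
  obtain ⟨x, hxdef⟩ : ∃ x : ℝ, x = Real.exp (-a / (e * e - 1)) := ⟨_, rfl⟩
  rw [← hxdef]
  have hx0 : 0 < x := by rw [hxdef]; exact Real.exp_pos _
  have hx1 : x ≤ 1 := by
    rw [hxdef]
    exact Real.exp_le_one_iff.mpr (div_nonpos_of_nonpos_of_nonneg (by linarith) hden.le)
  have hlogx : Real.log x = -a / (e * e - 1) := by rw [hxdef, Real.log_exp]
  have hF1 : Real.exp (-a / (e - 1)) = x ^ (e + 1) := by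
    rw [Real.rpow_def_of_pos hx0, hlogx]
    congr 1
    have h1 : e - 1 ≠ 0 := by linarith
    have h2 : e * e - 1 ≠ 0 := hden.ne'
    rw [div_mul_eq_mul_div, eq_div_iff h2, div_mul_eq_mul_div, div_eq_iff h1]
    ring
  have hX2 : Real.exp (-2 * a / (e * e - 1)) = x ^ 2 := by
    rw [hxdef, pow_two, ← Real.exp_add]; congr 1; ring
  rw [hF1, hX2]
  have hXx : x ^ (e + 1) ≤ x := by
    calc x ^ (e+1) ≤ x ^ (1:ℝ) := Real.rpow_le_rpow_of_exponent_ge hx0 hx1 (by linarith)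
      _ = x := Real.rpow_one x
  have hBer : 1 + e * (x - 1) ≤ x ^ e := by
    have h := one_add_mul_self_le_rpow_one_add (by linarith : (-1:ℝ) ≤ x - 1)
      (by linarith : (1:ℝ) ≤ e)
    rwa [show (1:ℝ) + (x - 1) = x by ring] at h
  have hXsplit : x ^ (e + 1) = x ^ e * x := by
    rw [Real.rpow_add hx0, Real.rpow_one]
  obtain ⟨r, hrdef⟩ : ∃ r : ℝ, r = (Real.sqrt 2)⁻¹ := ⟨_, rfl⟩
  rw [← hrdef] at hθ2
  have hce : (1 - r) * e ≤ 1 := by rw [hrdef, hedef]; exact ce_le_one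
  have hsq1 : (1:ℝ) ≤ Real.sqrt 2 := by
    nlinarith [Real.sq_sqrt (by norm_num : (0:ℝ) ≤ 2), Real.sqrt_nonneg 2]
  have hr0 : 0 ≤ r := by rw [hrdef]; positivity
  have hr1 : r ≤ 1 := by rw [hrdef]; exact inv_le_one_of_one_le₀ hsq1
  have step1 : 2*(1 - r)*(x ^ (e+1)) + 2*r*x ≤ 2*(1-θ)*(x ^ (e+1)) + 2*θ*x := by
    nlinarith [mul_nonneg (sub_nonneg.mpr hθ2) (sub_nonneg.mpr hXx)]
  have step2 : 2*(x ^ 2) ≤ 2*(1 - r)*(x ^ (e+1)) + 2*r*x := by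
    have h1 : (1-r)*(x*(1 + e*(x-1))) ≤ (1-r)*(x*(x ^ e)) :=
      mul_le_mul_of_nonneg_left
        (mul_le_mul_of_nonneg_left hBer hx0.le) (by linarith)
    have h2 : (0:ℝ) ≤ x*(1-x)*(1-(1-r)*e) :=
      mul_nonneg (mul_nonneg hx0.le (by linarith)) (by linarith)
    nlinarith [h1, h2, hXsplit]
  linarith

lemma pointwise_bound (N : ℕ) {s R : ℝ} (hs0 : 0 < s) (hs1 : s < 1) (hR : 0 < R)
    {x y : EuclideanSpace ℝ (Fin N)} (hx : ‖x‖ ≤ R) (hy : ‖y‖ ≤ R) :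
    ENNReal.ofReal (2 * Real.exp (-2 * R ^ 2 / (Real.exp 2 - 1))) ≤
      ENNReal.ofReal s * Kker N s x y := by
  have hs2 : -s/2 - 1 < -1 := by linarith
  have hsne : s ≠ 0 := hs0.ne'
  have hR2 : 0 ≤ R ^ 2 := sq_nonneg R
  have hexp1 : (2:ℝ) ≤ Real.exp 1 := by have := Real.add_one_le_exp (1:ℝ); linarith
  have hexp2 : (3:ℝ) ≤ Real.exp 2 := by have := Real.add_one_le_exp (2:ℝ); linarith
  have hθ1 : (2:ℝ) ^ (-s/2) ≤ 1 :=
    Real.rpow_le_one_of_one_le_of_nonpos (by norm_num) (by linarith)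
  have hθ0 : (0:ℝ) < (2:ℝ) ^ (-s/2) := Real.rpow_pos_of_pos (by norm_num) _
  have hm1 : ∀ t ∈ Ioc (1:ℝ) 2,
      Real.exp (-R ^ 2 / (Real.exp 1 - 1)) ≤ mehler N t x y := by
    intro t ht
    refine le_trans ?_ (mehler_lower N (by linarith [ht.1]) hx hy)
    apply Real.exp_le_exp.mpr
    rw [neg_div, neg_div, neg_le_neg_iff]
    have h1 : Real.exp 1 ≤ Real.exp t := Real.exp_le_exp.mpr ht.1.le
    gcongr
    linarith
  have hm2 : ∀ t ∈ Ioi (2:ℝ),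
      Real.exp (-R ^ 2 / (Real.exp 2 - 1)) ≤ mehler N t x y := by
    intro t ht
    have ht' : (2:ℝ) < t := ht
    refine le_trans ?_ (mehler_lower N (by linarith) hx hy)
    apply Real.exp_le_exp.mpr
    rw [neg_div, neg_div, neg_le_neg_iff]
    have h1 : Real.exp 2 ≤ Real.exp t := Real.exp_le_exp.mpr ht'.le
    gcongr
    linarith
  have hs2' : -s/2 ≠ 0 := by intro h; apply hsne; linarith
  have hss : (2:ℝ)/s * (-s/2) = -1 := by field_simp; try ring
  have hmem : (0:ℝ) ∉ Set.uIcc (1:ℝ) 2 := by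
    rw [Set.uIcc_of_le (by norm_num : (1:ℝ) ≤ 2)]
    norm_num
  have hint1 : IntegrableOn (fun t : ℝ => t ^ (-s/2-1)) (Ioc 1 2) volume :=
    (intervalIntegral.intervalIntegrable_rpow (Or.inr hmem)).1
  have hint2 : IntegrableOn (fun t : ℝ => t ^ (-s/2-1)) (Ioi 2) volume :=
    integrableOn_Ioi_rpow_of_lt hs2 (by norm_num)
  have hval1 : ∫ t in Ioc (1:ℝ) 2, t ^ (-s/2-1) = (1 - (2:ℝ) ^ (-s/2)) * (2/s) := by
    rw [← intervalIntegral.integral_of_le (by norm_num : (1:ℝ) ≤ 2),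
      integral_rpow (Or.inr ⟨by linarith, hmem⟩),
      show -s/2-1+1 = -s/2 by ring, Real.one_rpow, div_eq_iff hs2', mul_assoc, hss]
    ring
  have hval2 : ∫ t in Ioi (2:ℝ), t ^ (-s/2-1) = ((2:ℝ) ^ (-s/2)) * (2/s) := by
    rw [integral_Ioi_rpow_of_lt hs2 (by norm_num),
      show -s/2-1+1 = -s/2 by ring, div_eq_iff hs2', mul_assoc, hss]
    ring
  have h_nn1 : 0 ≤ᵐ[volume.restrict (Ioc (1:ℝ) 2)] fun t : ℝ => t ^ (-s/2-1) :=
    (ae_restrict_iff' measurableSet_Ioc).mpr (ae_of_all _ fun t ht =>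
      Real.rpow_nonneg (by linarith [ht.1] : (0:ℝ) ≤ t) _)
  have h_nn2 : 0 ≤ᵐ[volume.restrict (Ioi (2:ℝ))] fun t : ℝ => t ^ (-s/2-1) :=
    (ae_restrict_iff' measurableSet_Ioi).mpr (ae_of_all _ fun t ht =>
      Real.rpow_nonneg (by linarith [mem_Ioi.mp ht] : (0:ℝ) ≤ t) _)
  have hL1 : ∫⁻ t in Ioc (1:ℝ) 2, ENNReal.ofReal (t ^ (-s/2-1)) =
      ENNReal.ofReal ((1 - (2:ℝ) ^ (-s/2)) * (2/s)) := by
    rw [← ofReal_integral_eq_lintegral_ofReal hint1 h_nn1, hval1]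
  have hL2 : ∫⁻ t in Ioi (2:ℝ), ENNReal.ofReal (t ^ (-s/2-1)) =
      ENNReal.ofReal (((2:ℝ) ^ (-s/2)) * (2/s)) := by
    rw [← ofReal_integral_eq_lintegral_ofReal hint2 h_nn2, hval2]
  have hpull1 : ∫⁻ t in Ioc (1:ℝ) 2,
      ENNReal.ofReal (Real.exp (-R ^ 2 / (Real.exp 1 - 1)) * t ^ (-s/2-1)) =
      ENNReal.ofReal (Real.exp (-R ^ 2 / (Real.exp 1 - 1))) *
        ENNReal.ofReal ((1 - (2:ℝ) ^ (-s/2)) * (2/s)) := by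
    simp_rw [ENNReal.ofReal_mul (Real.exp_pos _).le]
    rw [lintegral_const_mul' _ _ ENNReal.ofReal_ne_top, hL1]
  have hpull2 : ∫⁻ t in Ioi (2:ℝ),
      ENNReal.ofReal (Real.exp (-R ^ 2 / (Real.exp 2 - 1)) * t ^ (-s/2-1)) =
      ENNReal.ofReal (Real.exp (-R ^ 2 / (Real.exp 2 - 1))) *
        ENNReal.ofReal (((2:ℝ) ^ (-s/2)) * (2/s)) := by
    simp_rw [ENNReal.ofReal_mul (Real.exp_pos _).le]
    rw [lintegral_const_mul' _ _ ENNReal.ofReal_ne_top, hL2]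
  have key1 : ∫⁻ t in Ioc (1:ℝ) 2,
      ENNReal.ofReal (Real.exp (-R ^ 2 / (Real.exp 1 - 1)) * t ^ (-s/2-1)) ≤
      ∫⁻ t in Ioc (1:ℝ) 2, ENNReal.ofReal (mehler N t x y * t ^ (-s/2-1)) :=
    setLIntegral_mono' measurableSet_Ioc fun t ht => ENNReal.ofReal_le_ofReal
      (mul_le_mul_of_nonneg_right (hm1 t ht)
        (Real.rpow_nonneg (by linarith [ht.1] : (0:ℝ) ≤ t) _))
  have key2 : ∫⁻ t in Ioi (2:ℝ),
      ENNReal.ofReal (Real.exp (-R ^ 2 / (Real.exp 2 - 1)) * t ^ (-s/2-1)) ≤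
      ∫⁻ t in Ioi (2:ℝ), ENNReal.ofReal (mehler N t x y * t ^ (-s/2-1)) :=
    setLIntegral_mono' measurableSet_Ioi fun t ht => ENNReal.ofReal_le_ofReal
      (mul_le_mul_of_nonneg_right (hm2 t ht)
        (Real.rpow_nonneg (by linarith [mem_Ioi.mp ht] : (0:ℝ) ≤ t) _))
  have hsplit : (∫⁻ t in Ioc (1:ℝ) 2, ENNReal.ofReal (mehler N t x y * t ^ (-s/2-1))) +
      (∫⁻ t in Ioi (2:ℝ), ENNReal.ofReal (mehler N t x y * t ^ (-s/2-1))) =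
      ∫⁻ t in Ioi (1:ℝ), ENNReal.ofReal (mehler N t x y * t ^ (-s/2-1)) := by
    rw [← lintegral_union measurableSet_Ioi (Ioc_disjoint_Ioi le_rfl),
      Ioc_union_Ioi_eq_Ioi (by norm_num : (1:ℝ) ≤ 2)]
  have hnn1' : (0:ℝ) ≤ (1 - (2:ℝ) ^ (-s/2)) * (2/s) :=
    mul_nonneg (by linarith) (by positivity)
  have hnn2' : (0:ℝ) ≤ ((2:ℝ) ^ (-s/2)) * (2/s) :=
    mul_nonneg hθ0.le (by positivity)
  calc ENNReal.ofReal (2 * Real.exp (-2 * R ^ 2 / (Real.exp 2 - 1)))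
      ≤ ENNReal.ofReal (s * (Real.exp (-R ^ 2 / (Real.exp 1 - 1)) *
          ((1 - (2:ℝ) ^ (-s/2)) * (2/s)) +
          Real.exp (-R ^ 2 / (Real.exp 2 - 1)) * (((2:ℝ) ^ (-s/2)) * (2/s)))) := by
        apply ENNReal.ofReal_le_ofReal
        have hr := real_ineq hs0 hs1 hR2
        have heq : s * (Real.exp (-R ^ 2 / (Real.exp 1 - 1)) *
            ((1 - (2:ℝ) ^ (-s/2)) * (2/s)) +
            Real.exp (-R ^ 2 / (Real.exp 2 - 1)) * (((2:ℝ) ^ (-s/2)) * (2/s))) =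
            2 * (1 - (2:ℝ) ^ (-s/2)) * Real.exp (-R ^ 2 / (Real.exp 1 - 1)) +
            2 * ((2:ℝ) ^ (-s/2)) * Real.exp (-R ^ 2 / (Real.exp 2 - 1)) := by
          have hss2 : s * (2/s) = 2 := by field_simp; try ring
          calc s * (Real.exp (-R ^ 2 / (Real.exp 1 - 1)) *
              ((1 - (2:ℝ) ^ (-s/2)) * (2/s)) +
              Real.exp (-R ^ 2 / (Real.exp 2 - 1)) * (((2:ℝ) ^ (-s/2)) * (2/s))) =
              (s * (2/s)) * (Real.exp (-R ^ 2 / (Real.exp 1 - 1)) * (1 - (2:ℝ) ^ (-s/2)) +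
                Real.exp (-R ^ 2 / (Real.exp 2 - 1)) * ((2:ℝ) ^ (-s/2))) := by ring
            _ = _ := by rw [hss2]; ring
        rw [heq]
        exact hr
    _ = ENNReal.ofReal s *
        (ENNReal.ofReal (Real.exp (-R ^ 2 / (Real.exp 1 - 1))) *
          ENNReal.ofReal ((1 - (2:ℝ) ^ (-s/2)) * (2/s)) +
         ENNReal.ofReal (Real.exp (-R ^ 2 / (Real.exp 2 - 1))) *
          ENNReal.ofReal (((2:ℝ) ^ (-s/2)) * (2/s))) := by
        rw [ENNReal.ofReal_mul hs0.le,
          ENNReal.ofReal_add (mul_nonneg (Real.exp_pos _).le hnn1')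
            (mul_nonneg (Real.exp_pos _).le hnn2'),
          ENNReal.ofReal_mul (Real.exp_pos _).le, ENNReal.ofReal_mul (Real.exp_pos _).le]
    _ = ENNReal.ofReal s *
        ((∫⁻ t in Ioc (1:ℝ) 2,
            ENNReal.ofReal (Real.exp (-R ^ 2 / (Real.exp 1 - 1)) * t ^ (-s/2-1))) +
         (∫⁻ t in Ioi (2:ℝ),
            ENNReal.ofReal (Real.exp (-R ^ 2 / (Real.exp 2 - 1)) * t ^ (-s/2-1)))) := by
        rw [hpull1, hpull2]
    _ ≤ ENNReal.ofReal s *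
        ((∫⁻ t in Ioc (1:ℝ) 2, ENNReal.ofReal (mehler N t x y * t ^ (-s/2-1))) +
         (∫⁻ t in Ioi (2:ℝ), ENNReal.ofReal (mehler N t x y * t ^ (-s/2-1)))) :=
        mul_le_mul_right (add_le_add key1 key2) _
    _ = ENNReal.ofReal s *
        ∫⁻ t in Ioi (1:ℝ), ENNReal.ofReal (mehler N t x y * t ^ (-s/2-1)) := by
        rw [hsplit]
    _ ≤ ENNReal.ofReal s *
        ∫⁻ t in Ioi (0:ℝ), ENNReal.ofReal (mehler N t x y * t ^ (-s/2-1)) :=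
        mul_le_mul_right (lintegral_mono_set (Ioi_subset_Ioi zero_le_one)) _
    _ = ENNReal.ofReal s * Kker N s x y := rfl

lemma Lgamma_mono (N : ℕ) (s : ℝ) {A A' B B' : Set (EuclideanSpace ℝ (Fin N))}
    (hA : A ⊆ A') (hB : B ⊆ B') : Lgamma N s A B ≤ Lgamma N s A' B' := by
  simp only [Lgamma]
  calc ∫⁻ x in A, ∫⁻ y in B, Kker N s x y ∂(gaussMeasure N) ∂(gaussMeasure N)
      ≤ ∫⁻ x in A, ∫⁻ y in B', Kker N s x y ∂(gaussMeasure N) ∂(gaussMeasure N) :=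
        lintegral_mono fun x => lintegral_mono_set hB
    _ ≤ ∫⁻ x in A', ∫⁻ y in B', Kker N s x y ∂(gaussMeasure N) ∂(gaussMeasure N) :=
        lintegral_mono_set hA

lemma key_bound (N : ℕ) {A B : Set (EuclideanSpace ℝ (Fin N))}
    (hA : MeasurableSet A) (hB : MeasurableSet B) {R : ℝ} (hR : 0 < R)
    (hAs : A ⊆ Metric.ball 0 R) (hBs : B ⊆ Metric.ball 0 R)
    {s : ℝ} (hs0 : 0 < s) (hs1 : s < 1) :
    2 * ENNReal.ofReal (Real.exp (-2 * R ^ 2 / (Real.exp 2 - 1))) *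
      gaussMeasure N A * gaussMeasure N B ≤ ENNReal.ofReal s * Lgamma N s A B := by
  set c : ENNReal := ENNReal.ofReal (2 * Real.exp (-2 * R ^ 2 / (Real.exp 2 - 1))) with hc
  have hpt : ∀ x ∈ A, ∀ y ∈ B, c ≤ ENNReal.ofReal s * Kker N s x y := by
    intro x hx y hy
    exact pointwise_bound N hs0 hs1 hR (mem_ball_zero_iff.mp (hAs hx)).le
      (mem_ball_zero_iff.mp (hBs hy)).le
  have hinner : ∀ x ∈ A, c * gaussMeasure N B ≤
      ENNReal.ofReal s * ∫⁻ y in B, Kker N s x y ∂(gaussMeasure N) := by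
    intro x hx
    rw [← lintegral_const_mul' _ _ ENNReal.ofReal_ne_top]
    calc c * gaussMeasure N B = ∫⁻ _ in B, c ∂(gaussMeasure N) :=
          (setLIntegral_const B c).symm
      _ ≤ ∫⁻ y in B, ENNReal.ofReal s * Kker N s x y ∂(gaussMeasure N) :=
          setLIntegral_mono' hB fun y hy => hpt x hx y hy
  calc 2 * ENNReal.ofReal (Real.exp (-2 * R ^ 2 / (Real.exp 2 - 1))) *
        gaussMeasure N A * gaussMeasure N B
      = (c * gaussMeasure N B) * gaussMeasure N A := by
        rw [hc, ENNReal.ofReal_mul (by norm_num : (0:ℝ) ≤ 2), ENNReal.ofReal_ofNat]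
        ring
    _ = ∫⁻ _ in A, c * gaussMeasure N B ∂(gaussMeasure N) :=
        (setLIntegral_const A _).symm
    _ ≤ ∫⁻ x in A, ENNReal.ofReal s *
          ∫⁻ y in B, Kker N s x y ∂(gaussMeasure N) ∂(gaussMeasure N) :=
        setLIntegral_mono' hA hinner
    _ = ENNReal.ofReal s * Lgamma N s A B := by
        rw [Lgamma, lintegral_const_mul' _ _ ENNReal.ofReal_ne_top]

lemma exists_pos_inter_ball (N : ℕ) {A : Set (EuclideanSpace ℝ (Fin N))}
    (hA0 : 0 < gaussMeasure N A) :
    ∃ n : ℕ, 0 < gaussMeasure N (A ∩ Metric.ball 0 ((n : ℝ) + 1)) := by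
  by_contra h
  push_neg at h
  have hzero : ∀ n : ℕ, gaussMeasure N (A ∩ Metric.ball 0 ((n : ℝ) + 1)) = 0 :=
    fun n => le_antisymm (h n) zero_le
  have hcover : A ⊆ ⋃ n : ℕ, A ∩ Metric.ball 0 ((n : ℝ) + 1) := by
    intro z hz
    obtain ⟨n, hn⟩ := exists_nat_gt ‖z‖
    exact Set.mem_iUnion.mpr ⟨n, hz, mem_ball_zero_iff.mpr (by linarith)⟩
  have : gaussMeasure N A = 0 :=
    measure_mono_null hcover (measure_iUnion_null fun n => hzero n)
  rw [this] at hA0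
  exact lt_irrefl _ hA0

/-- positivity of the interaction: for disjoint sets of positive Gaussian
measure there is $C>0$ with $s L^γ_s(A,B) ≥ C$ for all $s∈(0,1)$; if moreover
$A,B⊂ B_R(0)$ one can take $C = 2\exp(-2R^2/(e^2-1))γ(A)γ(B)$. -/
theorem stmt_9 (N : ℕ) (A B : Set (EuclideanSpace ℝ (Fin N)))
    (hA : MeasurableSet A) (hB : MeasurableSet B) (hAB : Disjoint A B)
    (hA0 : 0 < gaussMeasure N A) (hB0 : 0 < gaussMeasure N B) :
    (∃ C : ℝ, 0 < C ∧ ∀ s ∈ Set.Ioo (0 : ℝ) 1,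
      ENNReal.ofReal C ≤ ENNReal.ofReal s * Lgamma N s A B) ∧
    (∀ R : ℝ, 0 < R → A ⊆ Metric.ball 0 R → B ⊆ Metric.ball 0 R →
      ∀ s ∈ Set.Ioo (0 : ℝ) 1,
        2 * ENNReal.ofReal (Real.exp (-2 * R ^ 2 / (Real.exp 2 - 1))) *
            gaussMeasure N A * gaussMeasure N B
          ≤ ENNReal.ofReal s * Lgamma N s A B) := by
  constructor
  · -- part 1
    obtain ⟨nA, hnA⟩ := exists_pos_inter_ball N hA0
    obtain ⟨nB, hnB⟩ := exists_pos_inter_ball N hB0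
    set R : ℝ := max ((nA : ℝ) + 1) ((nB : ℝ) + 1) with hRdef
    have hR : 0 < R := lt_of_lt_of_le (by positivity) (le_max_left _ _)
    set A' := A ∩ Metric.ball 0 R with hA'def
    set B' := B ∩ Metric.ball 0 R with hB'def
    have hA'0 : 0 < gaussMeasure N A' := lt_of_lt_of_le hnA (measure_mono
      (Set.inter_subset_inter_right _ (Metric.ball_subset_ball (le_max_left _ _))))
    have hB'0 : 0 < gaussMeasure N B' := lt_of_lt_of_le hnB (measure_mono
      (Set.inter_subset_inter_right _ (Metric.ball_subset_ball (le_max_right _ _))))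
    set a0 : ENNReal := min (gaussMeasure N A') 1 with ha0def
    set b0 : ENNReal := min (gaussMeasure N B') 1 with hb0def
    have ha0pos : 0 < a0 := lt_min hA'0 zero_lt_one
    have hb0pos : 0 < b0 := lt_min hB'0 zero_lt_one
    have ha0top : a0 ≠ ⊤ := ne_top_of_le_ne_top ENNReal.one_ne_top (min_le_right _ _)
    have hb0top : b0 ≠ ⊤ := ne_top_of_le_ne_top ENNReal.one_ne_top (min_le_right _ _)
    have ha0t : 0 < a0.toReal := ENNReal.toReal_pos ha0pos.ne' ha0top
    have hb0t : 0 < b0.toReal := ENNReal.toReal_pos hb0pos.ne' hb0top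
    refine ⟨2 * Real.exp (-2 * R ^ 2 / (Real.exp 2 - 1)) * a0.toReal * b0.toReal,
      by positivity, ?_⟩
    intro s hs
    have hCeq : ENNReal.ofReal
        (2 * Real.exp (-2 * R ^ 2 / (Real.exp 2 - 1)) * a0.toReal * b0.toReal) =
        2 * ENNReal.ofReal (Real.exp (-2 * R ^ 2 / (Real.exp 2 - 1))) * a0 * b0 := by
      rw [ENNReal.ofReal_mul (by positivity), ENNReal.ofReal_mul (by positivity),
        ENNReal.ofReal_mul (by norm_num : (0:ℝ) ≤ 2), ENNReal.ofReal_ofNat,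
        ENNReal.ofReal_toReal ha0top, ENNReal.ofReal_toReal hb0top]
    rw [hCeq]
    calc 2 * ENNReal.ofReal (Real.exp (-2 * R ^ 2 / (Real.exp 2 - 1))) * a0 * b0
        ≤ 2 * ENNReal.ofReal (Real.exp (-2 * R ^ 2 / (Real.exp 2 - 1))) *
            gaussMeasure N A' * gaussMeasure N B' := by
          exact mul_le_mul' (mul_le_mul' le_rfl (min_le_left _ _)) (min_le_left _ _)
      _ ≤ ENNReal.ofReal s * Lgamma N s A' B' :=
          key_bound N (hA.inter measurableSet_ball) (hB.inter measurableSet_ball) hR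
            Set.inter_subset_right Set.inter_subset_right hs.1 hs.2
      _ ≤ ENNReal.ofReal s * Lgamma N s A B :=
          mul_le_mul_right (Lgamma_mono N s Set.inter_subset_left Set.inter_subset_left) _
  · -- part 2
    intro R hR hAs hBs s hs
    exact key_bound N hA hB hR hAs hBs hs.1 hs.2
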